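/- Let V be an inner product space over ℂ, N ≥ 1, ψf : Fin N → V any family, ψi : Fin N → V an orthonormal family, O : V →ₗ[ℂ] V linear, and φc ∈ V with ‖φc‖ = 1, φc lying in the span of the ψi, ⟪ψf k, φc⟫ = 0 for every k, and ⟪φc, O φc⟫ = 0. For k : Fin N let R k be the N×N complex matrix whose rows are (R k) a l = ⟪ψf a, ψi l⟫ for a ≠ k and (R k) k l = ⟪φc, ψi l⟫. Then Σ_{n : Fin N} det (M n) = Σ_{k : Fin N} ⟪ψf k, O φc⟫ · det (R k); i.e. the one-body transition element equals the core-hole-basis (CHB) sum over occupied final orbitals, with each final orbital ψf k replaced in turn by the core orbital φc (Eq. (21)). -/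

import Mathlib

open scoped InnerProductSpace
open Matrix

/-- Key matrix identity: if `S *ᵥ c = 0` and `b ⬝ᵥ c = 1`, then
`trace (adjugate S * A) = b ⬝ᵥ ((adjugate S * A) *ᵥ c)`. -/
lemma chb_key_trace {n : Type*} [Fintype n] [DecidableEq n]
    (S A : Matrix n n ℂ) (b c : n → ℂ)
    (hSc : S *ᵥ c = 0) (hbc : b ⬝ᵥ c = 1) :
    (S.adjugate * A).trace = b ⬝ᵥ ((S.adjugate * A) *ᵥ c) := by
  have hc0 : c ≠ 0 := by
    rintro rfl
    simp at hbc
  set Q : Matrix n n ℂ := 1 - vecMulVec c b with hQ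
  have hQsum : Q + vecMulVec c b = 1 := by simp [hQ]
  have hvc : vecMulVec c b *ᵥ c = c := by
    ext i
    simp only [mulVec, dotProduct, vecMulVec_apply, mul_assoc, ← Finset.mul_sum]
    rw [show ∑ j, b j * c j = 1 from hbc, mul_one]
  have hQc : Q *ᵥ c = 0 := by
    rw [hQ, sub_mulVec, one_mulVec, hvc, sub_self]
  have hdetQ : Q.det = 0 := by
    rw [← Matrix.exists_mulVec_eq_zero_iff]
    exact ⟨c, hc0, hQc⟩
  have h0 : Q * Q.adjugate = 0 := by
    rw [Matrix.mul_adjugate, hdetQ, zero_smul]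
  have hQadj : Q.adjugate = vecMulVec c b * Q.adjugate := by
    conv_lhs => rw [← one_mul Q.adjugate, ← hQsum, add_mul, h0, zero_add]
  have hSvc : S * vecMulVec c b = 0 := by
    have hS : ∀ i, ∑ k, S i k * c k = 0 := by
      intro i
      have := congrFun hSc i
      simpa [mulVec, dotProduct] using this
    ext i j
    simp only [mul_apply, vecMulVec_apply, Matrix.zero_apply, ← mul_assoc, ← Finset.sum_mul,
      hS i, zero_mul]
  have hSQ : S * Q = S := by
    rw [hQ, Matrix.mul_sub, mul_one, hSvc, sub_zero]
  have hadjS : S.adjugate = vecMulVec c b * S.adjugate := by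
    conv_lhs => rw [← hSQ, Matrix.adjugate_mul_distrib, hQadj, Matrix.mul_assoc,
      ← Matrix.adjugate_mul_distrib, hSQ]
  have htr : ∀ X : Matrix n n ℂ, (vecMulVec c b * X).trace = b ⬝ᵥ (X *ᵥ c) := by
    intro X
    simp only [Matrix.trace, Matrix.diag_apply, mul_apply, vecMulVec_apply, dotProduct,
      mulVec, Finset.mul_sum]
    rw [Finset.sum_comm]
    exact Finset.sum_congr rfl fun j _ => Finset.sum_congr rfl fun i _ => by ring
  calc (S.adjugate * A).trace = (vecMulVec c b * (S.adjugate * A)).trace := by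
        conv_lhs => rw [hadjS, Matrix.mul_assoc]
    _ = b ⬝ᵥ ((S.adjugate * A) *ᵥ c) := htr _

/-- **Core-hole-basis (CHB) formula, Eq. (21)**: the one-body transition
element `Σ_n det (M n)` equals the sum over occupied final orbitals of the
dipole coefficient `⟪ψf k, O φc⟫` times the overlap determinant `det (R k)`
in which the final orbital `ψf k` is replaced by the core orbital `φc`. -/
theorem chb_transition_formula
    {V : Type*} [NormedAddCommGroup V] [InnerProductSpace ℂ V]
    {N : ℕ} (hN : 1 ≤ N)
    (ψf ψi : Fin N → V)
    (hortho : Orthonormal ℂ ψi)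
    (O : V →ₗ[ℂ] V)
    (φc : V) (hnorm : ‖φc‖ = 1)
    (hspan : φc ∈ Submodule.span ℂ (Set.range ψi))
    (hperp : ∀ k : Fin N, ⟪ψf k, φc⟫_ℂ = 0)
    (hsel : ⟪φc, O φc⟫_ℂ = 0)
    (M : Fin N → Matrix (Fin N) (Fin N) ℂ)
    (hM : ∀ n k l : Fin N,
      M n k l = if l = n then ⟪ψf k, O (ψi n)⟫_ℂ else ⟪ψf k, ψi l⟫_ℂ)
    (R : Fin N → Matrix (Fin N) (Fin N) ℂ)
    (hR : ∀ k a l : Fin N,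
      R k a l = if a = k then ⟪φc, ψi l⟫_ℂ else ⟪ψf a, ψi l⟫_ℂ) :
    ∑ n : Fin N, (M n).det = ∑ k : Fin N, ⟪ψf k, O φc⟫_ℂ * (R k).det := by
  classical
  obtain ⟨a, ha⟩ := Submodule.mem_span_range_iff_exists_fun ℂ |>.mp hspan
  set S : Matrix (Fin N) (Fin N) ℂ := Matrix.of fun k l => ⟪ψf k, ψi l⟫_ℂ with hS
  set A : Matrix (Fin N) (Fin N) ℂ := Matrix.of fun k l => ⟪ψf k, O (ψi l)⟫_ℂ with hA
  set b : Fin N → ℂ := fun l => ⟪φc, ψi l⟫_ℂ with hb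
  -- b ⬝ᵥ a = 1
  have hbc : b ⬝ᵥ a = 1 := by
    have : (⟪φc, φc⟫_ℂ) = 1 := by
      rw [inner_self_eq_norm_sq_to_K, hnorm]; norm_num
    calc b ⬝ᵥ a = ∑ l, ⟪φc, ψi l⟫_ℂ * a l := rfl
      _ = ⟪φc, ∑ l, a l • ψi l⟫_ℂ := by
          rw [inner_sum]
          exact Finset.sum_congr rfl fun l _ => by rw [inner_smul_right]; ring
      _ = 1 := by rw [ha, this]
  -- S *ᵥ a = 0
  have hSc : S *ᵥ a = 0 := by
    ext k
    calc (S *ᵥ a) k = ∑ l, ⟪ψf k, ψi l⟫_ℂ * a l := rfl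
      _ = ⟪ψf k, ∑ l, a l • ψi l⟫_ℂ := by
          rw [inner_sum]
          exact Finset.sum_congr rfl fun l _ => by rw [inner_smul_right]; ring
      _ = 0 := by rw [ha, hperp k]
  -- dipole coefficients
  have hd : ∀ k, ⟪ψf k, O φc⟫_ℂ = (A *ᵥ a) k := by
    intro k
    calc ⟪ψf k, O φc⟫_ℂ = ⟪ψf k, O (∑ l, a l • ψi l)⟫_ℂ := by rw [ha]
      _ = ∑ l, a l • ⟪ψf k, O (ψi l)⟫_ℂ := by
          rw [map_sum, inner_sum]
          exact Finset.sum_congr rfl fun l _ => by rw [O.map_smul, inner_smul_right]; rfl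
      _ = (A *ᵥ a) k := by
          simp only [Matrix.mulVec, dotProduct, smul_eq_mul, hA, Matrix.of_apply]
          exact Finset.sum_congr rfl fun l _ => by ring
  -- LHS as a trace
  have hMdet : ∀ n, (M n).det = ∑ k, S.adjugate n k * A k n := by
    intro n
    have hMn : M n = S.updateCol n (fun k => A k n) := by
      ext k l
      rw [hM, Matrix.updateCol_apply]
      by_cases h : l = n <;> simp [h, hS, hA]
    rw [hMn, ← Matrix.cramer_apply, Matrix.cramer_eq_adjugate_mulVec]
    rfl
  have hLHS : ∑ n : Fin N, (M n).det = (S.adjugate * A).trace := by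
    simp only [hMdet, Matrix.trace, Matrix.diag_apply, Matrix.mul_apply]
  -- determinant of R k
  have hRdet : ∀ k, (R k).det = ∑ l, b l * S.adjugate l k := by
    intro k
    have hRk : R k = S.updateRow k b := by
      ext i l
      rw [hR, Matrix.updateRow_apply]
      by_cases h : i = k <;> simp [h, hS, hb]
    have h2 : (S.updateRow k b)ᵀ = Sᵀ.updateCol k b := by
      ext i j
      simp [Matrix.updateRow_apply, Matrix.updateCol_apply, Matrix.transpose_apply]
    rw [hRk, ← Matrix.det_transpose, h2, ← Matrix.cramer_apply]
    rw [Matrix.cramer_eq_adjugate_mulVec, ← Matrix.adjugate_transpose]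
    simp only [Matrix.mulVec, dotProduct, Matrix.transpose_apply]
    exact Finset.sum_congr rfl fun l _ => by ring
  -- conclude
  rw [hLHS, chb_key_trace S A b a hSc hbc]
  simp only [hd, hRdet]
  rw [← Matrix.mulVec_mulVec, dotProduct_mulVec]
  simp only [dotProduct, Matrix.vecMul, dotProduct]
  exact Finset.sum_congr rfl fun k _ => by ring
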